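/- Let A > 0 and B ≥ 0, and let (x, y) solve x'(s) = x(s)y(s) + A, y'(s) = -x(s)^2 - B on ℝ. Set τ = (Ax - By)/(A² + B²), ν = (Bx + Ay)/(A² + B²) and r = √(τ² + ν²). Then τ/ν → -B/A as s → ±∞, τ/r → ±B/√(A² + B²) as s → ±∞, and ν/r → ∓A/√(A² + B²) as s → ±∞. -/

import Mathlib

open Filter

open Set

/-- Linear comparison: if `f' ≤ c` on `[a,b]` then `f b ≤ f a + c (b-a)`. -/
lemma lin_bound {f f' : ℝ → ℝ} (hf : ∀ s, HasDerivAt f (f' s) s) {a b c : ℝ}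
    (hab : a ≤ b) (h : ∀ t, a ≤ t → t ≤ b → f' t ≤ c) :
    f b ≤ f a + c * (b - a) := by
  have hdiff : ∀ s, HasDerivAt (fun u => c * u - f u) (c - f' s) s := fun s => by
    have h := ((hasDerivAt_id s).const_mul c).sub (hf s)
    exact h.congr_deriv (by simp)
  have hmono : MonotoneOn (fun u => c * u - f u) (Icc a b) := by
    apply monotoneOn_of_deriv_nonneg (convex_Icc a b)
    · exact fun s _ => ((hdiff s).continuousAt).continuousWithinAt
    · exact fun s _ => ((hdiff s).differentiableAt).differentiableWithinAt
    · intro s hs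
      rw [interior_Icc] at hs
      rw [(hdiff s).deriv]
      have := h s hs.1.le hs.2.le
      linarith
  have := hmono (left_mem_Icc.2 hab) (right_mem_Icc.2 hab) hab
  simp only at this
  linarith

/-- Barrier: if `f a > c` and whenever `f t = c` (for `t ≥ a`) we have `f' t > 0`,
then `f` stays above `c`. -/
lemma stay_above {f f' : ℝ → ℝ} (hf : ∀ s, HasDerivAt f (f' s) s) {a c : ℝ}
    (ha : c < f a) (H : ∀ t, a ≤ t → f t = c → 0 < f' t) :
    ∀ s, a ≤ s → c < f s := by
  intro s has
  by_contra hcon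
  push_neg at hcon
  have hcont : Continuous f := by
    exact continuous_iff_continuousAt.2 fun t => (hf t).continuousAt
  set S : Set ℝ := {t ∈ Icc a s | f t ≤ c} with hS
  have hSne : S.Nonempty := ⟨s, ⟨right_mem_Icc.2 has, hcon⟩⟩
  have hSbdd : BddBelow S := ⟨a, fun t ht => ht.1.1⟩
  have hSclosed : IsClosed S :=
    (isClosed_Icc.inter (isClosed_le hcont continuous_const))
  set u := sInf S with hu
  have huS : u ∈ S := hSclosed.csInf_mem hSne hSbdd
  have hau : a ≤ u := huS.1.1
  have hfu_le : f u ≤ c := huS.2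
  have haul : a < u := by
    rcases eq_or_lt_of_le hau with h | h
    · exact absurd hfu_le (by rw [← h]; linarith)
    · exact h
  -- every point in [a, u) has f > c
  have hbefore : ∀ t, a ≤ t → t < u → c < f t := by
    intro t hat htu
    by_contra hc
    push_neg at hc
    have : t ∈ S := ⟨⟨hat, htu.le.trans huS.1.2⟩, hc⟩
    exact absurd (csInf_le hSbdd this) (not_le.2 htu)
  -- continuity gives f u ≥ c
  have hfu_ge : c ≤ f u := by
    have hlim : Tendsto f (nhdsWithin u (Iio u)) (nhds (f u)) :=
      (hcont.tendsto u).mono_left nhdsWithin_le_nhds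
    have hev : ∀ᶠ t in nhdsWithin u (Iio u), c ≤ f t := by
      filter_upwards [Ioo_mem_nhdsLT_of_mem (⟨haul, le_refl u⟩ : u ∈ Ioc a u)] with t ht
      exact (hbefore t ht.1.le ht.2).le
    exact ge_of_tendsto hlim hev
  have hfu : f u = c := le_antisymm hfu_le hfu_ge
  have hderiv : 0 < f' u := H u hau hfu
  -- slope argument: just left of u, f < c, contradicting hbefore
  have hslope : Tendsto (slope f u) (nhdsWithin u {u}ᶜ) (nhds (f' u)) :=
    (hasDerivAt_iff_tendsto_slope.1 (hf u))
  have hslope' : Tendsto (slope f u) (nhdsWithin u (Iio u)) (nhds (f' u)) :=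
    hslope.mono_left (nhdsWithin_mono u (fun t ht => ne_of_lt (mem_Iio.1 ht)))
  have hev2 : ∀ᶠ t in nhdsWithin u (Iio u), 0 < (f t - f u) / (t - u) := by
    have := hslope'.eventually (eventually_gt_nhds hderiv)
    filter_upwards [this] with t ht
    rw [slope_def_field] at ht
    simpa [div_eq_div_iff] using ht
  have hev3 : ∀ᶠ t in nhdsWithin u (Iio u), t ∈ Ioo a u :=
    Ioo_mem_nhdsLT_of_mem (⟨haul, le_refl u⟩ : u ∈ Ioc a u)
  rcases (hev2.and hev3).exists with ⟨t, ht1, ht2⟩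
  have htu : t - u < 0 := by linarith [ht2.2]
  have : f t - f u < 0 := by
    by_contra hge
    push_neg at hge
    have := div_nonpos_of_nonneg_of_nonpos hge htu.le
    linarith
  have := hbefore t ht2.1.le ht2.2
  linarith [hfu]

lemma div_div_same' (a b c : ℝ) (hc : c ≠ 0) : (a / c) / (b / c) = a / b := by
  rcases eq_or_ne b 0 with hb | hb
  · simp [hb]
  · field_simp

/-- Part 1: `y → -∞` as `s → +∞`. -/
lemma y_tendsto_atBot (A B : ℝ) (hA : 0 < A) (hB : 0 ≤ B) (x y : ℝ → ℝ)
    (hx : ∀ s, HasDerivAt x (x s * y s + A) s)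
    (hy : ∀ s, HasDerivAt y (-(x s) ^ 2 - B) s) :
    Tendsto y atTop atBot := by
  by_contra hcon
  -- y is antitone
  have hmono : ∀ a b : ℝ, a ≤ b → y b ≤ y a := by
    intro a b hab
    have := lin_bound hy hab (c := 0) (fun t _ _ => by nlinarith [sq_nonneg (x t)])
    linarith
  -- y is bounded below
  obtain ⟨L, hL⟩ : ∃ L, ∀ s, L < y s := by
    rw [tendsto_atBot] at hcon
    push_neg at hcon
    obtain ⟨b, hb⟩ := hcon
    refine ⟨b, fun s => ?_⟩
    obtain ⟨t, hts, hbt⟩ := (frequently_atTop.1 hb) s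
    exact lt_of_lt_of_le hbt (hmono s t hts)
  obtain ⟨M, hM0, hM⟩ : ∃ M, 0 ≤ M ∧ ∀ s, 0 ≤ s → |y s| ≤ M := by
    refine ⟨|L| + |y 0|, by positivity, fun s hs => ?_⟩
    rw [abs_le]
    constructor
    · have := hL s; have := neg_abs_le L; linarith [abs_nonneg (y 0)]
    · have := hmono 0 s hs; have := le_abs_self (y 0); linarith [abs_nonneg L]
  obtain ⟨δ, hδ, hδM⟩ : ∃ δ, 0 < δ ∧ δ * M ≤ A / 2 := by
    refine ⟨A / (2 * (M + 1)), by positivity, ?_⟩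
    rw [div_mul_eq_mul_div, div_le_div_iff₀ (by positivity) (by norm_num)]
    nlinarith
  -- key: x² cannot be eventually bounded below by a positive constant
  have key : ∀ T c : ℝ, 0 < c → (∀ s, T ≤ s → c ≤ (x s) ^ 2) → False := by
    intro T c hc hxc
    set s : ℝ := T + (y T - L) / c + 1 with hsdef
    have hTs : T ≤ s := by
      have : 0 ≤ (y T - L) / c := div_nonneg (by linarith [hL T]) hc.le
      simp only [hsdef]; linarith
    have := lin_bound hy hTs (c := -c) (fun t h1 h2 => by
      have := hxc t h1; nlinarith)
    have hLs := hL s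
    have : -c * (s - T) = -(y T - L) - c := by
      rw [hsdef]; field_simp; ring
    nlinarith [hL s]
  -- frequently |x| < δ
  have hfreq : ∀ T : ℝ, ∃ s, T ≤ s ∧ |x s| < δ := by
    intro T
    by_contra hcc
    push_neg at hcc
    refine key T (δ ^ 2) (by positivity) (fun s hs => ?_)
    have := hcc s hs
    calc δ ^ 2 ≤ |x s| ^ 2 := by nlinarith [abs_nonneg (x s)]
    _ = (x s) ^ 2 := sq_abs _
  obtain ⟨s₁, hs₁0, hs₁⟩ := hfreq 0
  rw [abs_lt] at hs₁
  -- lower barrier at -δ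
  have hlow : ∀ s, s₁ ≤ s → -δ < x s := by
    refine stay_above hx hs₁.1 (fun t ht hxt => ?_)
    have hyt := hM t (le_trans hs₁0 ht)
    have : x t * y t ≥ -(δ * M) := by
      have := abs_mul (x t) (y t)
      have h1 : |x t * y t| ≤ δ * M := by
        rw [abs_mul, hxt, abs_neg, abs_of_pos hδ]
        exact mul_le_mul_of_nonneg_left hyt hδ.le
      linarith [neg_abs_le (x t * y t)]
    linarith [hδM, hA]
  -- x reaches δ
  obtain ⟨s₂, hs₁₂, hs₂⟩ : ∃ s₂, s₁ ≤ s₂ ∧ δ ≤ x s₂ := by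
    by_contra hcc
    push_neg at hcc
    set s : ℝ := s₁ + (δ - x s₁) * (2 / A) + 1 with hsdef
    have hs : s₁ ≤ s := by
      have h1 : x s₁ < δ := hcc s₁ le_rfl
      have : 0 ≤ (δ - x s₁) * (2 / A) :=
        mul_nonneg (by linarith [hcc s₁ le_rfl]) (by positivity)
      simp only [hsdef]; linarith
    have hderiv : ∀ t, s₁ ≤ t → t ≤ s → -(x t * y t + A) ≤ -(A/2) := by
      intro t h1 h2
      have hxt1 : x t < δ := hcc t h1
      have hxt2 : -δ < x t := hlow t h1
      have hyt := hM t (le_trans hs₁0 h1)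
      have : x t * y t ≥ -(δ * M) := by
        have h3 : |x t * y t| ≤ δ * M := by
          rw [abs_mul]
          have habs : |x t| ≤ δ := by rw [abs_le]; constructor <;> linarith
          exact mul_le_mul habs hyt (abs_nonneg _) hδ.le
        linarith [neg_abs_le (x t * y t)]
      linarith
    have hnx : ∀ u, HasDerivAt (fun v => -x v) (-(x u * y u + A)) u := fun u => (hx u).neg
    have := lin_bound hnx hs hderiv
    have hend : x s₁ + (A/2) * (s - s₁) ≤ x s := by linarith
    have : (A/2) * (s - s₁) = (δ - x s₁) + A/2 := by
      rw [hsdef]; field_simp; ring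
    have := hcc s hs
    linarith
  -- x stays above δ/2
  have hstay : ∀ s, s₂ ≤ s → δ/2 < x s := by
    refine stay_above hx (by linarith) (fun t ht hxt => ?_)
    have hyt := hM t (le_trans (le_trans hs₁0 hs₁₂) ht)
    have : x t * y t ≥ -(δ * M) := by
      have h3 : |x t * y t| ≤ δ * M := by
        rw [abs_mul, hxt, abs_of_pos (by linarith : (0:ℝ) < δ/2)]
        refine mul_le_mul (by linarith) hyt (abs_nonneg _) hδ.le
      linarith [neg_abs_le (x t * y t)]
    linarith
  refine key s₂ ((δ/2)^2) (by positivity) (fun s hs => ?_)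
  have := hstay s hs
  nlinarith

/-- Part 2: `x → 0` as `s → +∞`. -/
lemma x_tendsto_zero (A B : ℝ) (hA : 0 < A) (hB : 0 ≤ B) (x y : ℝ → ℝ)
    (hx : ∀ s, HasDerivAt x (x s * y s + A) s)
    (hy : ∀ s, HasDerivAt y (-(x s) ^ 2 - B) s)
    (hyb : Tendsto y atTop atBot) :
    Tendsto x atTop (nhds 0) := by
  have hcont : Continuous x := continuous_iff_continuousAt.2 fun t => (hx t).continuousAt
  rw [Metric.tendsto_atTop]
  intro ε hε
  set K : ℝ := 3 * A / ε with hKdef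
  have hK : 0 < K := by positivity
  have hεK : ε * K = 3 * A := by rw [hKdef]; field_simp
  obtain ⟨T, hT⟩ : ∃ T, ∀ s, T ≤ s → y s ≤ -K :=
    eventually_atTop.1 (hyb.eventually (eventually_le_atBot (-K)))
  -- there is a point with |x| < ε
  obtain ⟨s₀, hs₀T, hs₀⟩ : ∃ s₀, T ≤ s₀ ∧ |x s₀| < ε := by
    by_contra hcc
    push_neg at hcc
    by_cases hpos : ∀ t, T ≤ t → ε ≤ x t
    · -- x ≥ ε forever : x' ≤ -2A, so x → -∞
      have hd : ∀ t, T ≤ t → t ≤ T + (x T - ε) / (2 * A) + 1 → x t * y t + A ≤ -(2 * A) := by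
        intro t h1 _
        have h2 : x t * y t ≤ ε * y t :=
          mul_le_mul_of_nonpos_right (hpos t h1) (by linarith [hT t h1, hK])
        have h3 : ε * y t ≤ ε * (-K) := mul_le_mul_of_nonneg_left (hT t h1) hε.le
        have h4 : ε * (-K) = -(3 * A) := by rw [← hεK]; ring
        linarith
      have hTs : T ≤ T + (x T - ε) / (2 * A) + 1 := by
        have : 0 ≤ (x T - ε) / (2 * A) :=
          div_nonneg (by linarith [hpos T le_rfl]) (by positivity)
        linarith
      have := lin_bound hx hTs hd
      have heq : -(2 * A) * (T + (x T - ε) / (2 * A) + 1 - T) = -(x T - ε) - 2 * A := by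
        field_simp; ring
      have := hpos _ hTs
      linarith
    · by_cases hneg : ∀ t, T ≤ t → x t ≤ -ε
      · -- x ≤ -ε forever : x' ≥ 3A, so x → +∞
        have hnx : ∀ u, HasDerivAt (fun v => -x v) (-(x u * y u + A)) u := fun u => (hx u).neg
        have hd : ∀ t, T ≤ t → t ≤ T + (-ε - x T) / (2 * A) + 1 →
            -(x t * y t + A) ≤ -(2 * A) := by
          intro t h1 _
          have h2 : x t * y t ≥ ε * K := by
            have := hneg t h1
            have := hT t h1
            nlinarith
          have := hεK
          linarith
        have hTs : T ≤ T + (-ε - x T) / (2 * A) + 1 := by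
          have : 0 ≤ (-ε - x T) / (2 * A) :=
            div_nonneg (by linarith [hneg T le_rfl]) (by positivity)
          linarith
        have := lin_bound hnx hTs hd
        have heq : -(2 * A) * (T + (-ε - x T) / (2 * A) + 1 - T) = -(-ε - x T) - 2 * A := by
          field_simp; ring
        have := hneg _ hTs
        linarith
      · -- mixed signs : IVT gives a zero of x, contradiction
        push_neg at hpos hneg
        obtain ⟨t₁, ht₁T, ht₁⟩ := hpos
        obtain ⟨t₂, ht₂T, ht₂⟩ := hneg
        have ht₁' : x t₁ ≤ -ε := by
          rcases le_abs.1 (hcc t₁ ht₁T) with h | h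
          · linarith
          · linarith
        have ht₂' : ε ≤ x t₂ := by
          rcases le_abs.1 (hcc t₂ ht₂T) with h | h
          · linarith
          · linarith
        rcases le_total t₁ t₂ with h12 | h21
        · obtain ⟨t₃, ht₃, hxt₃⟩ := intermediate_value_Icc h12 hcont.continuousOn
            (⟨by linarith, by linarith⟩ : (0:ℝ) ∈ Set.Icc (x t₁) (x t₂))
          have := hcc t₃ (le_trans ht₁T ht₃.1)
          rw [hxt₃] at this
          simp at this
          linarith
        · obtain ⟨t₃, ht₃, hxt₃⟩ := intermediate_value_Icc' h21 hcont.continuousOn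
            (⟨by linarith, by linarith⟩ : (0:ℝ) ∈ Set.Icc (x t₁) (x t₂))
          have := hcc t₃ (le_trans ht₂T ht₃.1)
          rw [hxt₃] at this
          simp at this
          linarith
  -- band (-ε, ε) is invariant from s₀ on
  have habs := abs_lt.1 hs₀
  have hnx : ∀ u, HasDerivAt (fun v => -x v) (-(x u * y u + A)) u := fun u => (hx u).neg
  have hlow : ∀ s, s₀ ≤ s → -ε < x s := by
    refine stay_above hx habs.1 (fun t ht hxt => ?_)
    have h1 := hT t (le_trans hs₀T ht)
    nlinarith
  have hupp : ∀ s, s₀ ≤ s → -ε < -x s := by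
    refine stay_above hnx (by linarith [habs.2]) (fun t ht hxt => ?_)
    have hxt' : x t = ε := by
      have : -x t = -ε := hxt
      linarith
    have h1 := hT t (le_trans hs₀T ht)
    nlinarith
  refine ⟨s₀, fun s hs => ?_⟩
  rw [Real.dist_eq, sub_zero, abs_lt]
  exact ⟨hlow s hs, by linarith [hupp s hs]⟩

/-- Part 3: the three `atTop` limits. -/
lemma limits_atTop (A B : ℝ) (hA : 0 < A) (hB : 0 ≤ B) (x y : ℝ → ℝ)
    (τ ν r : ℝ → ℝ)
    (hτ : ∀ s, τ s = (A * x s - B * y s) / (A ^ 2 + B ^ 2))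
    (hν : ∀ s, ν s = (B * x s + A * y s) / (A ^ 2 + B ^ 2))
    (hr : ∀ s, r s = Real.sqrt ((τ s) ^ 2 + (ν s) ^ 2))
    (hyb : Tendsto y atTop atBot) (hx0 : Tendsto x atTop (nhds 0)) :
    Tendsto (fun s => τ s / ν s) atTop (nhds (-B / A)) ∧
    Tendsto (fun s => τ s / r s) atTop (nhds (B / Real.sqrt (A ^ 2 + B ^ 2))) ∧
    Tendsto (fun s => ν s / r s) atTop (nhds (-(A / Real.sqrt (A ^ 2 + B ^ 2)))) := by
  have hden : (0:ℝ) < A ^ 2 + B ^ 2 := by positivity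
  have hsq0 : Real.sqrt (A ^ 2 + B ^ 2) ≠ 0 := (Real.sqrt_pos.2 hden).ne'
  -- x / y → 0
  have hyinv : Tendsto (fun s => (y s)⁻¹) atTop (nhds 0) := by
    have h1 : Tendsto (fun s => -y s) atTop atTop := tendsto_neg_atBot_atTop.comp hyb
    have h2 := h1.inv_tendsto_atTop
    have : Tendsto (fun s => -(-y s)⁻¹) atTop (nhds (-0)) := h2.neg
    simpa [inv_neg] using this
  have hq : Tendsto (fun s => x s / y s) atTop (nhds 0) := by
    simpa [div_eq_mul_inv] using hx0.mul hyinv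
  have hyneg : ∀ᶠ s in atTop, y s < 0 := hyb.eventually (eventually_lt_atBot 0)
  -- ν → -∞
  have hνb : Tendsto ν atTop atBot := by
    have h1 : Tendsto (fun s => B * x s) atTop (nhds (B * 0)) := hx0.const_mul B
    have h2 : Tendsto (fun s => A * y s) atTop atBot := hyb.const_mul_atBot hA
    have h3 : Tendsto (fun s => B * x s + A * y s) atTop atBot := h1.add_atBot h2
    have h4 := h3.atBot_div_const hden
    exact h4.congr fun s => (hν s).symm
  have hνneg : ∀ᶠ s in atTop, ν s < 0 := hνb.eventually (eventually_lt_atBot 0)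
  -- first limit : τ/ν → -B/A
  have hTV : Tendsto (fun s => τ s / ν s) atTop (nhds (-B / A)) := by
    have hnum : Tendsto (fun s => A * (x s / y s) - B) atTop (nhds (-B)) := by
      have := (hq.const_mul A).sub_const B
      simpa using this
    have hden2 : Tendsto (fun s => B * (x s / y s) + A) atTop (nhds A) := by
      have := (hq.const_mul B).add_const A
      simpa using this
    have h1 : Tendsto (fun s => (A * (x s / y s) - B) / (B * (x s / y s) + A)) atTop
        (nhds (-B / A)) := hnum.div hden2 hA.ne'
    refine h1.congr' ?_
    filter_upwards [hyneg] with s hs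
    have hy0 : y s ≠ 0 := hs.ne
    have e1 : A * (x s / y s) - B = (A * x s - B * y s) / y s := by
      field_simp
    have e2 : B * (x s / y s) + A = (B * x s + A * y s) / y s := by
      field_simp
    rw [e1, e2, div_div_same' _ _ _ hy0, hτ, hν, div_div_same' _ _ _ hden.ne']
  -- second limit : ν/r → -A/√(A²+B²)
  have hsqrtval : Real.sqrt ((-B / A) ^ 2 + 1) = Real.sqrt (A ^ 2 + B ^ 2) / A := by
    rw [show ((-B / A) ^ 2 + 1 : ℝ) = (A ^ 2 + B ^ 2) / A ^ 2 by field_simp; ring,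
      Real.sqrt_div (by positivity) _, Real.sqrt_sq hA.le]
  have hNR : Tendsto (fun s => ν s / r s) atTop
      (nhds (-(A / Real.sqrt (A ^ 2 + B ^ 2)))) := by
    have hc : Tendsto (fun s => (τ s / ν s) ^ 2 + 1) atTop (nhds ((-B / A) ^ 2 + 1)) :=
      (hTV.pow 2).add_const 1
    have hc2 : Tendsto (fun s => Real.sqrt ((τ s / ν s) ^ 2 + 1)) atTop
        (nhds (Real.sqrt ((-B / A) ^ 2 + 1))) :=
      (Real.continuous_sqrt.tendsto _).comp hc
    have hne : Real.sqrt ((-B / A) ^ 2 + 1) ≠ 0 := (Real.sqrt_pos.2 (by positivity)).ne'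
    have h2 : Tendsto (fun s => -(1 / Real.sqrt ((τ s / ν s) ^ 2 + 1))) atTop
        (nhds (-(1 / Real.sqrt ((-B / A) ^ 2 + 1)))) := (tendsto_const_nhds.div hc2 hne).neg
    have hval : -(1 / Real.sqrt ((-B / A) ^ 2 + 1)) = -(A / Real.sqrt (A ^ 2 + B ^ 2)) := by
      rw [hsqrtval, one_div_div]
    rw [hval] at h2
    refine h2.congr' ?_
    filter_upwards [hνneg] with s hs
    have hν0 : ν s ≠ 0 := hs.ne
    have hsq : Real.sqrt ((τ s / ν s) ^ 2 + 1) ≠ 0 := (Real.sqrt_pos.2 (by positivity)).ne'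
    have hrs : r s = -(ν s) * Real.sqrt ((τ s / ν s) ^ 2 + 1) := by
      rw [hr, show (τ s) ^ 2 + (ν s) ^ 2 = (ν s) ^ 2 * ((τ s / ν s) ^ 2 + 1) by
        field_simp,
        Real.sqrt_mul (sq_nonneg _), Real.sqrt_sq_eq_abs, abs_of_neg hs]
    rw [hrs]
    field_simp
  -- third limit : τ/r → B/√(A²+B²)
  have hTR : Tendsto (fun s => τ s / r s) atTop
      (nhds (B / Real.sqrt (A ^ 2 + B ^ 2))) := by
    have h1 := hTV.mul hNR
    have hval : (-B / A) * -(A / Real.sqrt (A ^ 2 + B ^ 2)) =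
        B / Real.sqrt (A ^ 2 + B ^ 2) := by
      field_simp
    rw [hval] at h1
    refine h1.congr' ?_
    filter_upwards [hνneg] with s hs
    have hν0 : ν s ≠ 0 := hs.ne
    rw [div_mul_div_comm, mul_comm (τ s) (ν s), mul_div_mul_left _ _ hν0]
  exact ⟨hTV, hTR, hNR⟩

/-- If `A > 0`, `B ≥ 0` and `(x, y)` solves `x' = xy + A`, `y' = -x² - B`
on `ℝ`, and `τ = (Ax - By)/(A² + B²)`, `ν = (Bx + Ay)/(A² + B²)`, `r = √(τ² + ν²)`,
then `τ/ν → -B/A` as `s → ±∞`, `τ/r → ±B/√(A² + B²)` and `ν/r → ∓A/√(A² + B²)`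
as `s → ±∞`. -/
theorem stmt_10 (A B : ℝ) (hA : 0 < A) (hB : 0 ≤ B) (x y : ℝ → ℝ)
    (hx : ∀ s, HasDerivAt x (x s * y s + A) s)
    (hy : ∀ s, HasDerivAt y (-(x s) ^ 2 - B) s)
    (τ ν r : ℝ → ℝ)
    (hτ : ∀ s, τ s = (A * x s - B * y s) / (A ^ 2 + B ^ 2))
    (hν : ∀ s, ν s = (B * x s + A * y s) / (A ^ 2 + B ^ 2))
    (hr : ∀ s, r s = Real.sqrt ((τ s) ^ 2 + (ν s) ^ 2)) :
    Tendsto (fun s => τ s / ν s) atTop (nhds (-B / A)) ∧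
    Tendsto (fun s => τ s / ν s) atBot (nhds (-B / A)) ∧
    Tendsto (fun s => τ s / r s) atTop (nhds (B / Real.sqrt (A ^ 2 + B ^ 2))) ∧
    Tendsto (fun s => τ s / r s) atBot (nhds (-(B / Real.sqrt (A ^ 2 + B ^ 2)))) ∧
    Tendsto (fun s => ν s / r s) atTop (nhds (-(A / Real.sqrt (A ^ 2 + B ^ 2)))) ∧
    Tendsto (fun s => ν s / r s) atBot (nhds (A / Real.sqrt (A ^ 2 + B ^ 2))) := by
  have hyb := y_tendsto_atBot A B hA hB x y hx hy
  have hx0 := x_tendsto_zero A B hA hB x y hx hy hyb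
  obtain ⟨h1, h3, h5⟩ := limits_atTop A B hA hB x y τ ν r hτ hν hr hyb hx0
  -- the reflected solution
  set X : ℝ → ℝ := fun s => -x (-s) with hXdef
  set Y : ℝ → ℝ := fun s => -y (-s) with hYdef
  set τ' : ℝ → ℝ := fun s => -τ (-s) with hτ'def
  set ν' : ℝ → ℝ := fun s => -ν (-s) with hν'def
  set r' : ℝ → ℝ := fun s => r (-s) with hr'def
  have hX : ∀ s, HasDerivAt X (X s * Y s + A) s := by
    intro s
    have h := ((hx (-s)).comp s (hasDerivAt_neg s)).neg
    convert h using 1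
    · rfl
    · rfl
    · rfl
    simp [hXdef, hYdef]
    try ring
  have hY : ∀ s, HasDerivAt Y (-(X s) ^ 2 - B) s := by
    intro s
    have h := ((hy (-s)).comp s (hasDerivAt_neg s)).neg
    convert h using 1
    · rfl
    · rfl
    · rfl
    simp [hXdef]
    try ring
  have hτ' : ∀ s, τ' s = (A * X s - B * Y s) / (A ^ 2 + B ^ 2) := by
    intro s
    simp only [hτ'def, hXdef, hYdef, hτ (-s)]
    ring
  have hν' : ∀ s, ν' s = (B * X s + A * Y s) / (A ^ 2 + B ^ 2) := by
    intro s
    simp only [hν'def, hXdef, hYdef, hν (-s)]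
    ring
  have hr' : ∀ s, r' s = Real.sqrt ((τ' s) ^ 2 + (ν' s) ^ 2) := by
    intro s
    simp only [hr'def, hτ'def, hν'def, hr (-s), neg_sq]
  have hYb := y_tendsto_atBot A B hA hB X Y hX hY
  have hX0 := x_tendsto_zero A B hA hB X Y hX hY hYb
  obtain ⟨g1, g3, g5⟩ := limits_atTop A B hA hB X Y τ' ν' r' hτ' hν' hr' hYb hX0
  have h2 : Tendsto (fun s => τ s / ν s) atBot (nhds (-B / A)) := by
    have e : Tendsto (fun s => τ (-s) / ν (-s)) atTop (nhds (-B / A)) :=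
      g1.congr (fun s => by simp only [hτ'def, hν'def, neg_div_neg_eq])
    exact (e.comp tendsto_neg_atBot_atTop).congr (fun s => by simp [Function.comp])
  have h4 : Tendsto (fun s => τ s / r s) atBot
      (nhds (-(B / Real.sqrt (A ^ 2 + B ^ 2)))) := by
    have e : Tendsto (fun s => τ (-s) / r (-s)) atTop
        (nhds (-(B / Real.sqrt (A ^ 2 + B ^ 2)))) :=
      g3.neg.congr (fun s => by simp only [hτ'def, hr'def, neg_div, neg_neg])
    exact (e.comp tendsto_neg_atBot_atTop).congr (fun s => by simp [Function.comp])
  have h6 : Tendsto (fun s => ν s / r s) atBot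
      (nhds (A / Real.sqrt (A ^ 2 + B ^ 2))) := by
    have e : Tendsto (fun s => ν (-s) / r (-s)) atTop
        (nhds (A / Real.sqrt (A ^ 2 + B ^ 2))) := by
      have := g5.neg
      rw [neg_neg] at this
      exact this.congr (fun s => by simp only [hν'def, hr'def, neg_div, neg_neg])
    exact (e.comp tendsto_neg_atBot_atTop).congr (fun s => by simp [Function.comp])
  exact ⟨h1, h2, h3, h4, h5, h6⟩
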